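/- Let T be a finite rooted tree with vertex set V, targets a : V → ℝ with a ≥ 0, and positive integer weights w : V → ℕ (w_v ≥ 1), and let T̃ be the chain-expanded tree of (T, w) with targets ã_{(i,j)} = a_i. If x̃ is a feasible assignment on T̃ that minimizes the ℓ1 objective ∑_{(i,j)} |ã_{(i,j)} − x̃_{(i,j)}| over all feasible assignments on T̃, then x̃ is constant along each chain: for every i ∈ V, x̃_{(i,1)} = x̃_{(i,2)} = ⋯ = x̃_{(i,w_i)}. -/

import Mathlib

open Finset
open scoped Classical

/-- A finite rooted tree: a distinguished root and a parent function under which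
every vertex eventually reaches the root. -/
structure SBHTree (V : Type*) [Fintype V] [DecidableEq V] where
  root : V
  parent : V → V
  parent_root : parent root = root
  reaches_root : ∀ v : V, ∃ n : ℕ, parent^[n] v = root

/-- The set of children of a vertex `v`. -/
def SBHTree.children {V : Type*} [Fintype V] [DecidableEq V]
    (T : SBHTree V) (v : V) : Finset V :=
  univ.filter (fun u => u ≠ T.root ∧ T.parent u = v)

/-- An assignment is feasible if it is non-negative and the value at each vertex is
at least the sum of the values at its children. -/
def SBHTree.Feasible {V : Type*} [Fintype V] [DecidableEq V]
    (T : SBHTree V) (x : V → ℝ) : Prop :=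
  (∀ v, 0 ≤ x v) ∧ ∀ v, (∑ u ∈ T.children v, x u) ≤ x v


/-- Child relation of the chain-expanded tree `T̃` of `(T, w)`. The chain for
vertex `i` is indexed by `Fin (w i)`, with index `j` representing level `j + 1`:
`(i, j)` is a child of `(i, j + 1)` for `j + 1 < w i`, and for each child
`k ∈ C(i)` in `T`, the top vertex `(k, w k − 1)` of `k`'s chain is a child of the
bottom vertex `(i, 0)` of `i`'s chain. -/
def ExpChild {V : Type*} [Fintype V] [DecidableEq V]
    (T : SBHTree V) (w : V → ℕ) (c p : Σ i : V, Fin (w i)) : Prop :=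
  (c.1 = p.1 ∧ (p.2 : ℕ) = (c.2 : ℕ) + 1) ∨
    ((c.1 ≠ T.root ∧ T.parent c.1 = p.1) ∧ (c.2 : ℕ) = w c.1 - 1 ∧ (p.2 : ℕ) = 0)

/-- Feasibility on the chain-expanded tree: non-negativity and the value at each
vertex is at least the sum of the values at its children. -/
def ExpFeasible {V : Type*} [Fintype V] [DecidableEq V]
    (T : SBHTree V) (w : V → ℕ) (x : (Σ i : V, Fin (w i)) → ℝ) : Prop :=
  (∀ v, 0 ≤ x v) ∧
    ∀ p : Σ i : V, Fin (w i),
      (∑ c ∈ univ.filter (fun c => ExpChild T w c p), x c) ≤ x p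

/-- For a finite rooted tree with non-negative targets `a` and
positive integer weights `w`, any feasible assignment on the chain-expanded tree
`T̃` (whose vertex `(i, j)` has target `a i`) that minimizes the ℓ1 objective over
all feasible assignments on `T̃` is constant along each chain. -/
theorem stmt_15 {V : Type*} [Fintype V] [DecidableEq V] (T : SBHTree V)
    (a : V → ℝ) (ha : ∀ v, 0 ≤ a v)
    (w : V → ℕ) (hw : ∀ v, 1 ≤ w v)
    (xt : (Σ i : V, Fin (w i)) → ℝ) (hfeas : ExpFeasible T w xt)
    (hopt : ∀ yt : (Σ i : V, Fin (w i)) → ℝ, ExpFeasible T w yt →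
      (∑ v : Σ i : V, Fin (w i), |a v.1 - xt v|)
        ≤ ∑ v : Σ i : V, Fin (w i), |a v.1 - yt v|) :
    ∀ (i : V) (j j' : Fin (w i)), xt ⟨i, j⟩ = xt ⟨i, j'⟩ := by
  classical
  -- a fixed point of the parent map must be the root
  have hfix : ∀ u : V, T.parent u = u → u = T.root := by
    intro u hu
    obtain ⟨n, hn⟩ := T.reaches_root u
    rwa [Function.iterate_fixed hu] at hn
  obtain ⟨hnn, hcon⟩ := hfeas
  -- the children set of an interior chain vertex is a singleton
  have hset : ∀ (i : V) (pj : Fin (w i)) (m : ℕ) (hm : (pj : ℕ) = m + 1),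
      univ.filter (fun c => ExpChild T w c ⟨i, pj⟩)
        = {⟨i, ⟨m, by have := pj.isLt; omega⟩⟩} := by
    intro i pj m hm
    ext c
    simp only [mem_filter, mem_univ, true_and, mem_singleton]
    simp only [ExpChild]
    constructor
    · rintro (⟨h1, h2⟩ | ⟨_, _, h3⟩)
      · obtain ⟨c1, c2⟩ := c
        have h1' : c1 = i := h1
        subst h1'
        have h2' : (pj : ℕ) = (c2 : ℕ) + 1 := h2
        exact congrArg (Sigma.mk _) (Fin.ext (show (c2 : ℕ) = m by omega))
      · have h3' : (pj : ℕ) = 0 := h3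
        omega
    · rintro rfl
      left
      exact ⟨rfl, hm⟩
  -- monotonicity along a chain
  have hstep : ∀ (i : V) (m : ℕ) (hm : m + 1 < w i),
      xt ⟨i, ⟨m, by omega⟩⟩ ≤ xt ⟨i, ⟨m + 1, hm⟩⟩ := by
    intro i m hm
    have h := hcon ⟨i, ⟨m + 1, hm⟩⟩
    rw [hset i ⟨m + 1, hm⟩ m rfl, Finset.sum_singleton] at h
    exact h
  have hmono : ∀ (i : V) (n m : ℕ) (hn : n < w i) (hm : m < w i), n ≤ m →
      xt ⟨i, ⟨n, hn⟩⟩ ≤ xt ⟨i, ⟨m, hm⟩⟩ := by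
    intro i n m
    induction m with
    | zero =>
      intro hn hm hnm
      have : n = 0 := by omega
      subst this; exact le_refl _
    | succ k ih =>
      intro hn hm hnm
      rcases Nat.lt_or_ge n (k + 1) with h | h
      · exact le_trans (ih hn (by omega) (by omega)) (hstep i k hm)
      · have : n = k + 1 := by omega
        subst this; exact le_refl _
  intro i j j'
  by_contra hne
  have hwi := hw i
  set bot : Fin (w i) := ⟨0, by omega⟩ with hbotdef
  set top : Fin (w i) := ⟨w i - 1, by omega⟩ with htopdef
  set b := xt ⟨i, bot⟩ with hbdef
  set t := xt ⟨i, top⟩ with htdef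
  have hbt : ∀ j : Fin (w i), b ≤ xt ⟨i, j⟩ ∧ xt ⟨i, j⟩ ≤ t := by
    intro j
    constructor
    · have h := hmono i 0 (j : ℕ) (by omega) j.isLt (Nat.zero_le _)
      simpa using h
    · have h := hmono i (j : ℕ) (w i - 1) j.isLt (by omega) (by omega)
      simpa using h
  have hblt : b < t := by
    rcases lt_or_ge b t with h | h
    · exact h
    · exfalso
      have h1 := hbt j
      have h2 := hbt j'
      exact hne (by linarith [h1.1, h1.2, h2.1, h2.2])
  set cv : ℝ := max b (min (a i) t) with hcvdef
  have hbcv : b ≤ cv := le_max_left _ _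
  have hcvt : cv ≤ t := max_le hblt.le (min_le_right _ _)
  -- the clamp is at least as close to `a i` as any point of `[b, t]`
  have hclamp : ∀ x : ℝ, b ≤ x → x ≤ t → |a i - cv| ≤ |a i - x| := by
    intro x hbx hxt
    have hd1 : a i - x ≤ |a i - x| := le_abs_self _
    have hd2 : x - a i ≤ |a i - x| := by
      rw [abs_sub_comm]; exact le_abs_self _
    rw [abs_sub_le_iff]
    constructor
    · have : a i - |a i - x| ≤ min (a i) t := by
        apply le_min (by linarith [abs_nonneg (a i - x)]) (by linarith)
      have := le_trans this (le_max_right b (min (a i) t))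
      linarith [hcvdef ▸ this]
    · have : cv ≤ a i + |a i - x| := by
        rw [hcvdef]
        exact max_le (by linarith) (le_trans (min_le_left _ _)
          (by linarith [abs_nonneg (a i - x)]))
      linarith
  set yt : (Σ i : V, Fin (w i)) → ℝ :=
    fun v => if v.1 = i then cv else xt v with hytdef
  have hyti : ∀ j : Fin (w i), yt ⟨i, j⟩ = cv := by
    intro j; simp [hytdef]
  have hytn : ∀ v : Σ i : V, Fin (w i), v.1 ≠ i → yt v = xt v := by
    intro v hv; simp [hytdef, hv]
  -- children of a bottom vertex are tops of other chains
  have hchild0 : ∀ (p1 : V) (p2 : Fin (w p1)) (c : Σ i : V, Fin (w i)),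
      ExpChild T w c ⟨p1, p2⟩ → (p2 : ℕ) = 0 → c.1 ≠ p1 := by
    intro p1 p2 c hc h0
    rcases hc with ⟨h1, h2⟩ | ⟨⟨hr, hp⟩, _, _⟩
    · simp only at h2; omega
    · intro hcp
      exact hr (hfix c.1 (by rw [hp, hcp]))
  -- feasibility of the modified assignment
  have hfy : ExpFeasible T w yt := by
    constructor
    · intro v
      by_cases hv : v.1 = i
      · obtain ⟨v1, v2⟩ := v
        simp only at hv; subst hv
        rw [hyti v2]
        exact le_trans (hnn ⟨v1, bot⟩) hbcv
      · rw [hytn v hv]; exact hnn v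
    · rintro ⟨p1, p2⟩
      by_cases hp1 : p1 = i
      · subst hp1
        rcases Nat.eq_zero_or_pos (p2 : ℕ) with h0 | hpos
        · have hsum : ∀ c ∈ univ.filter (fun c => ExpChild T w c ⟨p1, p2⟩),
              yt c = xt c := by
            intro c hc
            rw [mem_filter] at hc
            exact hytn c (hchild0 p1 p2 c hc.2 h0)
          rw [Finset.sum_congr rfl hsum, hyti p2]
          have h2 : p2 = bot := Fin.ext (by simpa [hbotdef] using h0)
          calc (∑ c ∈ univ.filter (fun c => ExpChild T w c ⟨p1, p2⟩), xt c)
              ≤ xt ⟨p1, p2⟩ := hcon ⟨p1, p2⟩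
            _ = b := by rw [h2]
            _ ≤ cv := hbcv
        · obtain ⟨m, hm⟩ : ∃ m, (p2 : ℕ) = m + 1 := ⟨(p2 : ℕ) - 1, by omega⟩
          rw [hset p1 p2 m hm, Finset.sum_singleton, hyti, hyti]
      · have hsum : ∀ c ∈ univ.filter (fun c => ExpChild T w c ⟨p1, p2⟩),
            yt c ≤ xt c := by
          intro c hc
          rw [mem_filter] at hc
          by_cases hci : c.1 = i
          · obtain ⟨c1, c2⟩ := c
            simp only at hci; subst hci
            rcases hc.2 with ⟨h1, _⟩ | ⟨_, h2, _⟩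
            · exact absurd h1.symm hp1
            · simp only at h2
              have : c2 = top := Fin.ext (by simpa [htopdef] using h2)
              rw [hyti c2, this]
              exact hcvt
          · rw [hytn c hci]
        have := Finset.sum_le_sum hsum
        rw [hytn ⟨p1, p2⟩ hp1]
        exact le_trans this (hcon ⟨p1, p2⟩)
  -- the modified assignment has strictly smaller objective
  have hlt : (∑ v : Σ i : V, Fin (w i), |a v.1 - yt v|)
      < ∑ v : Σ i : V, Fin (w i), |a v.1 - xt v| := by
    apply Finset.sum_lt_sum
    · rintro ⟨v1, v2⟩ -
      by_cases hv : v1 = i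
      · subst hv
        rw [hyti v2]
        exact hclamp _ (hbt v2).1 (hbt v2).2
      · rw [hytn ⟨v1, v2⟩ hv]
    · rcases lt_or_ge cv t with h | h
      · refine ⟨⟨i, top⟩, Finset.mem_univ _, ?_⟩
        rw [hyti top]
        have hac : a i ≤ cv := by
          rcases le_or_gt (a i) t with h' | h'
          · have hmin : min (a i) t = a i := min_eq_left h'
            rw [hcvdef, hmin]
            exact le_max_right _ _
          · exfalso
            have hmin : min (a i) t = t := min_eq_right h'.le
            rw [hcvdef, hmin] at h
            exact absurd (le_max_right b t) (not_le.mpr h)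
        rw [abs_of_nonpos (by linarith), abs_of_nonpos (by linarith)]
        simp only [neg_sub]
        linarith
      · have hcveq : cv = t := le_antisymm hcvt h
        have hta : t ≤ a i := by
          rcases le_or_gt (a i) b with h' | h'
          · exfalso
            have h1 : min (a i) t ≤ b := le_trans (min_le_left _ _) h'
            have h2 : cv ≤ b := max_le (le_refl _) h1
            rw [hcveq] at h2
            linarith
          · rcases le_or_gt t (a i) with h'' | h''
            · exact h''
            · exfalso
              have h1 : min (a i) t = a i := min_eq_left h''.le
              have h2 : cv ≤ max b (a i) := le_of_eq (by rw [hcvdef, h1])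
              have h3 : max b (a i) < t := max_lt hblt h''
              rw [hcveq] at h2
              linarith
        refine ⟨⟨i, bot⟩, Finset.mem_univ _, ?_⟩
        rw [hyti bot]
        rw [abs_of_nonneg (by linarith), abs_of_nonneg (by linarith)]
        linarith
  exact absurd (hopt yt hfy) (not_le.mpr hlt)
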